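/- For every rational q, the relative orthogonal complement S_q⁺ ⊓ (S_q⁻)ᗮ of S_q⁻ inside S_q⁺ is one-dimensional and is spanned by the vector e_q; equivalently e_q ∈ S_q⁺, e_q is orthogonal to S_q⁻, and S_q⁺ = S_q⁻ ⊔ ℂ·e_q. (Thus every atom of the nest 𝒩₁ is one-dimensional.) -/

import Mathlib

open MeasureTheory

/-- The closed subspace of `L²(ν)` of functions vanishing `ν`-a.e. on the set `s`. -/
noncomputable def vanishOn (ν : Measure ℝ) (s : Set ℝ) : Submodule ℂ (Lp ℂ 2 ν) where
  carrier := {f | (f : ℝ → ℂ) =ᵐ[ν.restrict s] 0}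
  add_mem' := by
    intro f g hf hg
    filter_upwards [hf, hg, ae_restrict_of_ae (Lp.coeFn_add f g)] with x hfx hgx hx
    show (↑↑(f + g) : ℝ → ℂ) x = 0
    rw [hx]
    simp only [Pi.add_apply]
    simp [hfx, hgx]
  zero_mem' := by
    filter_upwards [ae_restrict_of_ae (Lp.coeFn_zero ℂ 2 ν)] with x hx
    show (↑↑(0 : Lp ℂ 2 ν) : ℝ → ℂ) x = 0
    simpa using hx
  smul_mem' := by
    intro c f hf
    filter_upwards [hf, ae_restrict_of_ae (Lp.coeFn_smul c f)] with x hfx hx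
    show (↑↑(c • f) : ℝ → ℂ) x = 0
    rw [hx]
    simp [hfx]

/-- The measure `μ = ∑_{q ∈ ℚ} δ_q` on the Borel σ-algebra of `ℝ`. -/
noncomputable def mu : Measure ℝ := Measure.sum fun q : ℚ => Measure.dirac (q : ℝ)

lemma mu_singleton_ne_top (x : ℝ) : mu {x} ≠ ⊤ := by
  have h : mu {x} = ∑' q : ℚ, Measure.dirac (q : ℝ) {x} :=
    Measure.sum_apply _ (measurableSet_singleton x)
  rw [h]
  by_cases hx : ∃ q : ℚ, (q : ℝ) = x
  · obtain ⟨q₀, hq₀⟩ := hx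
    have hs : ∀ q : ℚ, q ≠ q₀ → Measure.dirac (q : ℝ) {x} = 0 := by
      intro q hq
      rw [Measure.dirac_apply]
      have : (q : ℝ) ≠ x := by
        intro h'
        exact hq (by exact_mod_cast hq₀ ▸ h')
      simp [Set.indicator, this]
    rw [tsum_eq_single q₀ hs, Measure.dirac_apply]
    simp [Set.indicator, hq₀]
  · have hs : ∀ q : ℚ, Measure.dirac (q : ℝ) {x} = 0 := by
      intro q
      rw [Measure.dirac_apply]
      have : (q : ℝ) ≠ x := fun h' => hx ⟨q, h'⟩
      simp [Set.indicator, this]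
    simp [hs]

/-- `e q` is the indicator function of the singleton `{q}` as an element of `H = L²(ℝ, μ)`. -/
noncomputable def e (q : ℚ) : Lp ℂ 2 mu :=
  indicatorConstLp 2 (measurableSet_singleton (q : ℝ)) (mu_singleton_ne_top _) (1 : ℂ)

lemma mu_rat_singleton (r : ℚ) : mu {(r : ℝ)} = 1 := by
  rw [mu, Measure.sum_apply _ (measurableSet_singleton _)]
  rw [tsum_eq_single r (fun q hq => by
    rw [Measure.dirac_apply]
    simp [Set.indicator, Set.mem_singleton_iff, Rat.cast_injective.ne hq])]
  simp [Measure.dirac_apply]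

lemma ae_mu_iff {p : ℝ → Prop} : (∀ᵐ x ∂mu, p x) ↔ ∀ r : ℚ, p (r : ℝ) := by
  constructor
  · intro h r
    by_contra hr
    have : mu {(r : ℝ)} = 0 :=
      measure_mono_null (fun x hx => by rw [Set.mem_singleton_iff.1 hx]; exact hr) h
    rw [mu_rat_singleton] at this
    exact one_ne_zero this
  · intro h
    rw [ae_iff]
    apply measure_mono_null (t := (Set.range ((↑) : ℚ → ℝ))ᶜ)
    · intro x hx hx'
      obtain ⟨r, rfl⟩ := hx'
      exact hx (h r)
    · rw [mu, Measure.sum_apply _ (Set.countable_range _).measurableSet.compl]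
      simp [Measure.dirac_apply']

lemma mem_vanishOn_iff {s : Set ℝ} (hs : MeasurableSet s) (f : Lp ℂ 2 mu) :
    f ∈ vanishOn mu s ↔ ∀ r : ℚ, (r : ℝ) ∈ s → (f : ℝ → ℂ) r = 0 := by
  have : f ∈ vanishOn mu s ↔ (f : ℝ → ℂ) =ᵐ[mu.restrict s] 0 := Iff.rfl
  rw [this, Filter.EventuallyEq, ae_restrict_iff' hs, ae_mu_iff]
  simp

lemma e_apply (r s : ℚ) :
    (e r : ℝ → ℂ) (s : ℝ) = Set.indicator {(r : ℝ)} (fun _ => (1 : ℂ)) (s : ℝ) :=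
  ae_mu_iff.1 (indicatorConstLp_coeFn (p := 2)) s

lemma mu_restrict_singleton (r : ℚ) : mu.restrict {(r : ℝ)} = Measure.dirac (r : ℝ) := by
  rw [Measure.restrict_singleton, mu_rat_singleton, one_smul]

lemma inner_e (r : ℚ) (f : Lp ℂ 2 mu) :
    (inner ℂ (e r) f : ℂ) = (f : ℝ → ℂ) (r : ℝ) := by
  rw [MeasureTheory.L2.inner_def]
  have hcongr : (fun x => (inner ℂ ((e r : ℝ → ℂ) x) ((f : ℝ → ℂ) x) : ℂ)) =ᵐ[mu]
      Set.indicator {(r : ℝ)} (fun x => (f : ℝ → ℂ) x) := by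
    filter_upwards [indicatorConstLp_coeFn (p := 2) (μ := mu)
      (hs := measurableSet_singleton (r : ℝ)) (hμs := mu_singleton_ne_top _) (c := (1 : ℂ))]
      with x hx
    rw [show ((e r : ℝ → ℂ) x) = Set.indicator {(r : ℝ)} (fun _ => (1 : ℂ)) x from hx]
    by_cases hxr : x ∈ ({(r : ℝ)} : Set ℝ)
    · simp [Set.indicator_of_mem hxr, RCLike.inner_apply]
    · rw [Set.indicator_of_notMem hxr, Set.indicator_of_notMem hxr]; simp
  rw [integral_congr_ae hcongr, integral_indicator (measurableSet_singleton _),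
    mu_restrict_singleton, integral_dirac]

/-- The subspace `S_t⁺ = {f ∈ L²(μ) : f = 0 μ-a.e. on (t, ∞)}`. -/
noncomputable def Splus (t : ℝ) : Submodule ℂ (Lp ℂ 2 mu) := vanishOn mu (Set.Ioi t)

/-- The subspace `S_t⁻ = {f ∈ L²(μ) : f = 0 μ-a.e. on [t, ∞)}`. -/
noncomputable def Sminus (t : ℝ) : Submodule ℂ (Lp ℂ 2 mu) := vanishOn mu (Set.Ici t)

/-- The subspace `N_t = {f ∈ L²(λ) : f = 0 λ-a.e. on (t, ∞)}` of `K = L²(ℝ, λ)`,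
where `λ` is Lebesgue measure. -/
noncomputable def Nt (t : ℝ) : Submodule ℂ (Lp ℂ 2 (volume : Measure ℝ)) :=
  vanishOn volume (Set.Ioi t)

/-- For every rational `q`, the relative orthogonal complement `S_q⁺ ⊓ (S_q⁻)ᗮ`
of `S_q⁻` inside `S_q⁺` is one-dimensional, spanned by `e_q`: one has `e_q ≠ 0`,
`e_q ∈ S_q⁺`, `e_q ⊥ S_q⁻`, `S_q⁺ ⊓ (S_q⁻)ᗮ = ℂ·e_q`, and `S_q⁺ = S_q⁻ ⊔ ℂ·e_q`. -/
theorem atom_of_nest_one (q : ℚ) :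
    e q ≠ 0 ∧
    e q ∈ Splus (q : ℝ) ∧
    e q ∈ (Sminus (q : ℝ))ᗮ ∧
    Splus (q : ℝ) ⊓ (Sminus (q : ℝ))ᗮ = Submodule.span ℂ {e q} ∧
    Splus (q : ℝ) = Sminus (q : ℝ) ⊔ Submodule.span ℂ {e q} ∧
    Module.finrank ℂ ↥(Splus (q : ℝ) ⊓ (Sminus (q : ℝ))ᗮ) = 1 := by
  have hne : e q ≠ 0 := by
    intro h
    have hz : ∀ᵐ x ∂mu, (e q : ℝ → ℂ) x = 0 := by
      rw [h]; exact Lp.coeFn_zero ℂ 2 mu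
    have h1 := ae_mu_iff.1 hz q
    rw [e_apply] at h1
    simp at h1
  have heSplus : e q ∈ Splus (q : ℝ) := by
    refine (mem_vanishOn_iff measurableSet_Ioi _).2 fun r hr => ?_
    have hne' : (r : ℝ) ≠ (q : ℝ) := ne_of_gt hr
    rw [e_apply]
    simp [Set.indicator, hne']
  have heOrth : e q ∈ (Sminus (q : ℝ))ᗮ := by
    rw [Submodule.mem_orthogonal]
    intro g hg
    have hgq : (g : ℝ → ℂ) (q : ℝ) = 0 :=
      (mem_vanishOn_iff measurableSet_Ici g).1 hg q (Set.mem_Ici.2 le_rfl)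
    have h0 : (inner ℂ (e q) g : ℂ) = 0 := by rw [inner_e]; exact hgq
    calc (inner ℂ g (e q) : ℂ) = starRingEnd ℂ (inner ℂ (e q) g : ℂ) := (inner_conj_symm _ _).symm
      _ = 0 := by rw [h0, map_zero]
  have key : ∀ f ∈ Splus (q : ℝ) ⊓ (Sminus (q : ℝ))ᗮ, f = ((f : ℝ → ℂ) (q : ℝ)) • e q := by
    rintro f ⟨hfp, hfo⟩
    apply Lp.ext
    have hplus : ∀ r : ℚ, q < r → (f : ℝ → ℂ) (r : ℝ) = 0 := fun r hr =>
      (mem_vanishOn_iff measurableSet_Ioi f).1 hfp r (Set.mem_Ioi.2 (by exact_mod_cast hr))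
    have hminus : ∀ r : ℚ, r < q → (f : ℝ → ℂ) (r : ℝ) = 0 := by
      intro r hr
      have her : e r ∈ Sminus (q : ℝ) := by
        refine (mem_vanishOn_iff measurableSet_Ici _).2 fun s hs => ?_
        have hne' : (s : ℝ) ≠ (r : ℝ) :=
          ne_of_gt (lt_of_lt_of_le (by exact_mod_cast hr) hs)
        rw [e_apply]; simp [Set.indicator, hne']
      have h0 := (Submodule.mem_orthogonal _ _).1 hfo (e r) her
      rwa [inner_e] at h0
    have hsm : ((((f : ℝ → ℂ) (q : ℝ)) • e q : Lp ℂ 2 mu) : ℝ → ℂ) =ᵐ[mu]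
        fun x => ((f : ℝ → ℂ) (q : ℝ)) • (e q : ℝ → ℂ) x := Lp.coeFn_smul _ _
    have hmain : ∀ᵐ x ∂mu, (f : ℝ → ℂ) x = ((f : ℝ → ℂ) (q : ℝ)) • (e q : ℝ → ℂ) x := by
      refine ae_mu_iff.2 fun r => ?_
      rcases lt_trichotomy r q with h | h | h
      · rw [hminus r h, e_apply]
        have hne' : (r : ℝ) ≠ (q : ℝ) := by exact_mod_cast ne_of_lt h
        simp [Set.indicator, hne']
      · subst h
        rw [e_apply]
        simp [Set.indicator]
      · rw [hplus r h, e_apply]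
        have hne' : (r : ℝ) ≠ (q : ℝ) := by exact_mod_cast ne_of_gt h
        simp [Set.indicator, hne']
    exact Filter.EventuallyEq.trans
      (show (f : ℝ → ℂ) =ᵐ[mu] fun x => ((f : ℝ → ℂ) (q : ℝ)) • (e q : ℝ → ℂ) x from hmain)
      hsm.symm
  have hspan : Splus (q : ℝ) ⊓ (Sminus (q : ℝ))ᗮ = Submodule.span ℂ {e q} := by
    apply le_antisymm
    · intro f hf
      rw [key f hf]
      exact Submodule.smul_mem _ _ (Submodule.mem_span_singleton_self _)
    · rw [Submodule.span_le, Set.singleton_subset_iff]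
      exact ⟨heSplus, heOrth⟩
  have hsup : Splus (q : ℝ) = Sminus (q : ℝ) ⊔ Submodule.span ℂ {e q} := by
    apply le_antisymm
    · intro f hf
      set c := (f : ℝ → ℂ) (q : ℝ) with hc
      refine Submodule.mem_sup.2 ⟨f - c • e q, ?_, c • e q,
        Submodule.smul_mem _ _ (Submodule.mem_span_singleton_self _), by abel⟩
      refine (mem_vanishOn_iff measurableSet_Ici _).2 fun r hr => ?_
      have hsub : ∀ᵐ x ∂mu, ((f - c • e q : Lp ℂ 2 mu) : ℝ → ℂ) x
          = (f : ℝ → ℂ) x - c • (e q : ℝ → ℂ) x := by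
        filter_upwards [Lp.coeFn_sub f (c • e q), Lp.coeFn_smul c (e q)] with x h1 h2
        rw [h1]; simp [h2]
      have hr' := ae_mu_iff.1 hsub r
      rw [hr']
      rcases eq_or_lt_of_le (Set.mem_Ici.1 hr) with h | h
      · have hqr : q = r := by exact_mod_cast h
        subst hqr
        rw [e_apply, ← hc]
        simp [Set.indicator]
      · have hfr : (f : ℝ → ℂ) (r : ℝ) = 0 :=
          (mem_vanishOn_iff measurableSet_Ioi f).1 hf r h
        have hne' : (r : ℝ) ≠ (q : ℝ) := ne_of_gt h
        rw [hfr, e_apply]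
        simp [Set.indicator, hne']
    · refine sup_le ?_ ?_
      · intro g hg
        exact (mem_vanishOn_iff measurableSet_Ioi _).2 fun r hr =>
          (mem_vanishOn_iff measurableSet_Ici _).1 hg r (Set.mem_Ici.2 (le_of_lt (Set.mem_Ioi.1 hr)))
      · rw [Submodule.span_le, Set.singleton_subset_iff]
        exact heSplus
  refine ⟨hne, heSplus, heOrth, hspan, hsup, ?_⟩
  rw [hspan]
  exact finrank_span_singleton hne
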